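/- arXiv:2512.22794 — 9 statements merged into one kernel-verified Lean document; each statement's English description precedes it below -/
import Mathlib

section
/- Consider functions f : Fin m → Fin p, g : Fin m' → Fin p', a : Fin p → Fin q, b : Fin p' → Fin q', and horizontal maps σ : Fin m → Fin m', ω : Fin p → Fin p', τ : Fin q → Fin q' with g ∘ σ = ω ∘ f and b ∘ ω = τ ∘ a. If σ is order-preserving on the fibres of τ ∘ a ∘ f (mapping into fibres of b ∘ g), and ω is order-preserving on the fibres of τ ∘ a (mapping into fibres of b), then σ is order-preserving on the fibres of ω ∘ f (mapping into fibres of g): that is, for all i j : Fin m with ω (f i) = ω (f j) and i ≤ j, one has σ i ≤ σ j. -/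
/-- Proposition 4.3 (verticalfop) in the skeletal category of finite sets:
if `σ` is order-preserving on the fibres of `τ ∘ a ∘ f` and `ω` is order-preserving
on the fibres of `τ ∘ a`, then `σ` is order-preserving on the fibres of `ω ∘ f`. -/
theorem verticalfop_Fin {m m' p p' q q' : ℕ}
    (f : Fin m → Fin p) (g : Fin m' → Fin p')
    (a : Fin p → Fin q) (b : Fin p' → Fin q')
    (σ : Fin m → Fin m') (ω : Fin p → Fin p') (τ : Fin q → Fin q')
    (hsq₁ : g ∘ σ = ω ∘ f) (hsq₂ : b ∘ ω = τ ∘ a)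
    (hσ : ∀ i j : Fin m, i ≤ j → τ (a (f i)) = τ (a (f j)) → σ i ≤ σ j)
    (hω : ∀ x y : Fin p, x ≤ y → τ (a x) = τ (a y) → ω x ≤ ω y) :
    ∀ i j : Fin m, i ≤ j → ω (f i) = ω (f j) → σ i ≤ σ j := by
  intro i j hij hfij
  apply hσ i j hij
  have := congrArg b hfij
  simpa using (congrFun hsq₂ (f i)).symm.trans (this.trans (congrFun hsq₂ (f j)))
end

section
/- For f : Fin m → Fin p and g : Fin p → Fin q, let (π f, η f) denote the unique pita factorisation of f (π f a bijection on Fin m order-preserving on the fibres of f, η f monotone, f = η f ∘ π f), and similarly for g ∘ f and g. Then there exists a unique function e : Fin m → Fin p with e ∘ π (g ∘ f) = π g ∘ f and η g ∘ e = η (g ∘ f). -/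
def IsPita {m n : ℕ} (f : Fin m → Fin n) (p : Fin m → Fin m) (e : Fin m → Fin n) : Prop :=
  Monotone e ∧ Function.Bijective p ∧
    (∀ i j : Fin m, f i = f j → i ≤ j → p i ≤ p j) ∧ e ∘ p = f

/-- Fin is strictly factorisable: there is a unique comparison map `e = η(f/g)`
with `e ∘ π(g∘f) = π(g) ∘ f` and `η(g) ∘ e = η(g∘f)`. -/
theorem eta_comparison_existsUnique {m p q : ℕ}
    (f : Fin m → Fin p) (g : Fin p → Fin q)
    (pgf : Fin m → Fin m) (egf : Fin m → Fin q)
    (pg : Fin p → Fin p) (eg : Fin p → Fin q)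
    (hgf : IsPita (g ∘ f) pgf egf) (hg : IsPita g pg eg) :
    ∃! e : Fin m → Fin p, e ∘ pgf = pg ∘ f ∧ eg ∘ e = egf := by
  obtain ⟨-, hbij, -, hfac⟩ := hgf
  obtain ⟨-, -, -, hfacg⟩ := hg
  let σ : Fin m ≃ Fin m := Equiv.ofBijective pgf hbij
  refine ⟨pg ∘ f ∘ σ.symm, ⟨?_, ?_⟩, ?_⟩
  · funext i
    show pg (f (σ.symm (σ i))) = pg (f i)
    rw [σ.symm_apply_apply]
  · funext i
    have h1 : eg (pg (f (σ.symm i))) = g (f (σ.symm i)) := congrFun hfacg _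
    have h2 : egf (pgf (σ.symm i)) = g (f (σ.symm i)) := congrFun hfac _
    have h3 : pgf (σ.symm i) = i := σ.apply_symm_apply i
    simp only [Function.comp]
    rw [h1, ← h2, h3]
  · intro e ⟨he1, _⟩
    funext i
    have h := congrFun he1 (σ.symm i)
    show e i = pg (f (σ.symm i))
    calc e i = e (σ (σ.symm i)) := by rw [σ.apply_symm_apply]
    _ = pg (f (σ.symm i)) := h
end

section
/- For composable functions f : Fin m → Fin p, g : Fin p → Fin q, h : Fin q → Fin r, the comparison maps of the pita factorisation satisfy η(g/h) ∘ η(f/(h∘g)) = η((g∘f)/h), where for u : Fin a → Fin b and v : Fin b → Fin c, η(u/v) denotes the unique map e : Fin a → Fin b with e ∘ π(v∘u) = π(v) ∘ u and η(v) ∘ e = η(v∘u). -/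
/-- Associativity of the comparison maps: `η(g/h) ∘ η(f/(h∘g)) = η((g∘f)/h)`. -/
theorem eta_comparison_assoc {m p q r : ℕ}
    (f : Fin m → Fin p) (g : Fin p → Fin q) (h : Fin q → Fin r)
    (ph : Fin q → Fin q) (eh : Fin q → Fin r) (hh : IsPita h ph eh)
    (phg : Fin p → Fin p) (ehg : Fin p → Fin r) (hhg : IsPita (h ∘ g) phg ehg)
    (phgf : Fin m → Fin m) (ehgf : Fin m → Fin r) (hhgf : IsPita (h ∘ g ∘ f) phgf ehgf)
    (e₁ : Fin p → Fin q) (he₁ : e₁ ∘ phg = ph ∘ g ∧ eh ∘ e₁ = ehg)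
    (e₂ : Fin m → Fin p) (he₂ : e₂ ∘ phgf = phg ∘ f ∧ ehg ∘ e₂ = ehgf)
    (e₃ : Fin m → Fin q) (he₃ : e₃ ∘ phgf = ph ∘ (g ∘ f) ∧ eh ∘ e₃ = ehgf) :
    e₁ ∘ e₂ = e₃ := by
  funext x
  obtain ⟨y, rfl⟩ := hhgf.2.1.2 x
  have h1 := congrFun he₂.1 y
  have h2 := congrFun he₁.1 (f y)
  have h3 := congrFun he₃.1 y
  simp only [Function.comp] at h1 h2 h3 ⊢
  rw [h1, h2, h3]
end

section
/- For f : Fin m → Fin p and g : Fin p → Fin q, if g and g ∘ f are both monotone, then η(f/g) = f; in particular in that case π(g∘f) = π(g) = id and η(g) ∘ f = η(g∘f). -/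
lemma pita_id_of_monotone {m n : ℕ} {f : Fin m → Fin n} {p : Fin m → Fin m}
    {e : Fin m → Fin n} (hf : Monotone f) (h : IsPita f p e) : p = id := by
  obtain ⟨he, hb, hfib, hep⟩ := h
  have hsm : StrictMono p := by
    intro i j hij
    rcases lt_or_eq_of_le (hf hij.le) with hlt | heq
    · by_contra hle
      push_neg at hle
      have := he hle
      rw [← hep] at hlt
      exact absurd this (not_le.mpr hlt)
    · exact lt_of_le_of_ne (hfib i j heq hij.le) (fun h' => hij.ne (hb.1 h'))
  have : Set.range p = Set.range (id : Fin m → Fin m) := by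
    simp [Set.range_eq_univ.mpr hb.2]
  have inst : WellFoundedLT (Fin m) := inferInstance
  exact (@StrictMono.range_inj (Fin m) (Fin m) _ _ inst p id hsm strictMono_id).1 this

/-- Lemma 5.7 (6): if `g` and `g ∘ f` are monotone then `η(f/g) = f`; in particular
`π(g∘f) = π(g) = id` and `η(g) ∘ f = η(g∘f)`. -/
theorem eta_comparison_of_monotone {m p q : ℕ}
    (f : Fin m → Fin p) (g : Fin p → Fin q)
    (hg : Monotone g) (hgf : Monotone (g ∘ f))
    (pgf : Fin m → Fin m) (egf : Fin m → Fin q) (hPgf : IsPita (g ∘ f) pgf egf)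
    (pg : Fin p → Fin p) (eg : Fin p → Fin q) (hPg : IsPita g pg eg)
    (e : Fin m → Fin p) (he : e ∘ pgf = pg ∘ f ∧ eg ∘ e = egf) :
    e = f ∧ pgf = id ∧ pg = id ∧ eg ∘ f = egf := by
  have h1 : pgf = id := pita_id_of_monotone hgf hPgf
  have h2 : pg = id := pita_id_of_monotone hg hPg
  have h3 : e = f := by
    have := he.1
    rw [h1, h2] at this
    simpa using this
  exact ⟨h3, h1, h2, by rw [← h3]; exact he.2⟩
end

section
/- Let f : Fin m → Fin p, g : Fin m' → Fin p' with σ : Fin m → Fin m' a bijection and τ : Fin p → Fin p' a bijection such that g ∘ σ = τ ∘ f. Then there exists a unique ω : Fin m → Fin m' such that ω ∘ π(f) = π(g) ∘ σ and η(g) ∘ ω = τ ∘ η(f). Moreover, if σ is order-preserving on the fibres of τ ∘ f (i.e. for i ≤ j with τ(f i) = τ(f j), σ i ≤ σ j), then ω = π(τ ∘ η(f)) and η(g) = η(τ ∘ η(f)). -/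
lemma isPita_lt {m n : ℕ} {f : Fin m → Fin n} {p : Fin m → Fin m} {e : Fin m → Fin n}
    (h : IsPita f p e) (i j : Fin m) :
    p i < p j ↔ (f i < f j ∨ (f i = f j ∧ i < j)) := by
  obtain ⟨he, hb, hfib, hcomp⟩ := h
  have hfi : ∀ k, e (p k) = f k := fun k => congrFun hcomp k
  constructor
  · intro hlt
    rcases lt_trichotomy (f i) (f j) with h1 | h1 | h1
    · exact Or.inl h1
    · refine Or.inr ⟨h1, ?_⟩
      rcases lt_or_ge i j with h2 | h2
      · exact h2
      · exact absurd (hfib j i h1.symm h2) (not_le.mpr hlt)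
    · have := he (hlt.le)
      rw [hfi, hfi] at this
      exact absurd this (not_le.mpr h1)
  · rintro (h1 | ⟨h1, h2⟩)
    · by_contra hc
      have := he (not_lt.mp hc)
      rw [hfi, hfi] at this
      exact absurd this (not_le.mpr h1)
    · refine lt_of_le_of_ne (hfib i j h1 h2.le) fun hpe => ?_
      exact absurd (hb.1 hpe) (ne_of_lt h2)

lemma isPita_unique {m n : ℕ} {f : Fin m → Fin n} {p₁ p₂ : Fin m → Fin m}
    {e₁ e₂ : Fin m → Fin n} (h₁ : IsPita f p₁ e₁) (h₂ : IsPita f p₂ e₂) :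
    p₁ = p₂ ∧ e₁ = e₂ := by
  have hb₁ := h₁.2.1
  have hb₂ := h₂.2.1
  have hp : p₁ = p₂ := by
    set E₁ := Equiv.ofBijective p₁ hb₁ with hE₁
    have hsm : StrictMono (fun a => p₂ (E₁.symm a)) := by
      intro a b hab
      have h1 : p₁ (E₁.symm a) < p₁ (E₁.symm b) := by
        simpa [hE₁, Equiv.ofBijective_apply_symm_apply] using hab
      exact (isPita_lt h₂ _ _).mpr ((isPita_lt h₁ _ _).mp h1)
    have hbij : Function.Bijective (fun a => p₂ (E₁.symm a)) :=
      hb₂.comp E₁.symm.bijective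
    let O : Fin m ≃o Fin m :=
      { toEquiv := Equiv.ofBijective _ hbij, map_rel_iff' := hsm.le_iff_le }
    have hO : ∀ a, p₂ (E₁.symm a) = a := by
      intro a
      have := Fin.coe_orderIso_apply O a
      exact Fin.ext this
    funext i
    exact ((congrArg p₂ (E₁.symm_apply_apply i)).symm.trans (hO (p₁ i))).symm
  subst hp
  refine ⟨rfl, funext fun a => ?_⟩
  obtain ⟨i, rfl⟩ := hb₁.2 a
  have := (congrFun h₁.2.2.2 i).trans (congrFun h₂.2.2.2 i).symm
  exact this

/-- Proposition 6.7 in Fin: for a square `g ∘ σ = τ ∘ f` with `σ`, `τ` bijections,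
there is a unique `ω` with `ω ∘ π(f) = π(g) ∘ σ` and `η(g) ∘ ω = τ ∘ η(f)`;
moreover if `σ` is order-preserving on the fibres of `τ ∘ f`, then
`ω = π(τ ∘ η(f))` and `η(g) = η(τ ∘ η(f))`. -/
theorem pita_square_comparison {m p : ℕ}
    (f g : Fin m → Fin p) (σ : Fin m → Fin m) (τ : Fin p → Fin p)
    (hσ : Function.Bijective σ) (hτ : Function.Bijective τ)
    (hsq : g ∘ σ = τ ∘ f)
    (pf : Fin m → Fin m) (ef : Fin m → Fin p) (hPf : IsPita f pf ef)
    (pg : Fin m → Fin m) (eg : Fin m → Fin p) (hPg : IsPita g pg eg) :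
    (∃! ω : Fin m → Fin m, ω ∘ pf = pg ∘ σ ∧ eg ∘ ω = τ ∘ ef) ∧
      ((∀ i j : Fin m, i ≤ j → τ (f i) = τ (f j) → σ i ≤ σ j) →
        ∀ ω : Fin m → Fin m, (ω ∘ pf = pg ∘ σ ∧ eg ∘ ω = τ ∘ ef) →
          ∀ pt : Fin m → Fin m, ∀ et : Fin m → Fin p,
            IsPita (τ ∘ ef) pt et → ω = pt ∧ eg = et) := by
  obtain ⟨hef, hbf, hfibf, hcf⟩ := hPf
  obtain ⟨heg, hbg, hfibg, hcg⟩ := hPg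
  set E := Equiv.ofBijective pf hbf with hE
  have hEs : ∀ a, pf (E.symm a) = a := fun a => E.apply_symm_apply a
  set ω₀ : Fin m → Fin m := fun a => pg (σ (E.symm a)) with hω₀
  have hcond : ∀ ω : Fin m → Fin m, (ω ∘ pf = pg ∘ σ ∧ eg ∘ ω = τ ∘ ef) ↔ ω = ω₀ := by
    intro ω
    constructor
    · rintro ⟨h1, _⟩
      funext a
      have := congrFun h1 (E.symm a)
      simpa [hEs a] using this
    · rintro rfl
      constructor
      · funext i
        show pg (σ (E.symm (pf i))) = pg (σ i)
        rw [show pf i = E i from rfl, E.symm_apply_apply]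
      · funext a
        have h1 : eg (pg (σ (E.symm a))) = g (σ (E.symm a)) := congrFun hcg _
        have h2 : g (σ (E.symm a)) = τ (f (E.symm a)) := congrFun hsq _
        have h3 : f (E.symm a) = ef (pf (E.symm a)) := (congrFun hcf _).symm
        simp only [Function.comp, hω₀, h1, h2, h3, hEs a]
  constructor
  · exact ⟨ω₀, (hcond ω₀).mpr rfl, fun ω hω => (hcond ω).mp hω⟩
  · intro hord ω hω pt et hPt
    have hωeq := (hcond ω).mp hω
    -- show IsPita (τ ∘ ef) ω eg, then apply uniqueness
    have hPω : IsPita (τ ∘ ef) ω eg := by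
      refine ⟨heg, ?_, ?_, hω.2⟩
      · rw [hωeq]; exact hbg.comp (hσ.comp E.symm.bijective)
      · intro i j hτf hij
        rw [hωeq]
        set a := E.symm i
        set b := E.symm j
        have hfa : pf a = i := hEs i
        have hfb : pf b = j := hEs j
        have hEf : τ (f a) = τ (f b) := by
          have h3a : f a = ef (pf a) := (congrFun hcf _).symm
          have h3b : f b = ef (pf b) := (congrFun hcf _).symm
          rw [h3a, h3b, hfa, hfb]; exact hτf
        have hfab : f a = f b := hτ.1 hEf
        have hab : a ≤ b := by
          by_contra hc
          have hba : b < a := not_le.mp hc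
          have := hfibf b a hfab.symm hba.le
          rw [hfa, hfb] at this
          have : i = j := le_antisymm hij this
          subst this
          exact absurd (hbf.1 (hfa.trans hfb.symm)) (ne_of_gt hba)
        have hσab : σ a ≤ σ b := hord a b hab hEf
        have hgab : g (σ a) = g (σ b) := by
          have := congrFun hsq a
          have h2 := congrFun hsq b
          simp only [Function.comp] at this h2
          rw [this, h2, hEf]
        exact hfibg _ _ hgab hσab
    exact isPita_unique hPω hPt
end

section
/- For f₃ : Fin m → Fin p and f₂ : Fin p → Fin q, the following coherence identity between pita units holds: π(η(f₃/f₂)) ∘ π(f₂ ∘ f₃) = π(π(f₂) ∘ η(f₃)) ∘ π(f₃) as maps Fin m → Fin m. -/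
private lemma pita_perm_lt {m n : ℕ} {g : Fin m → Fin n} {P : Fin m → Fin m} {E : Fin m → Fin n}
    (h : IsPita g P E) {i j : Fin m}
    (hij : g i < g j ∨ (g i = g j ∧ i < j)) : P i < P j := by
  obtain ⟨hE, hbij, hfib, hcomp⟩ := h
  rcases hij with hlt | ⟨heq, hlt⟩
  · by_contra hle
    push_neg at hle
    have h1 : E (P j) ≤ E (P i) := hE hle
    rw [show E (P j) = g j from congrFun hcomp j, show E (P i) = g i from congrFun hcomp i] at h1
    exact absurd h1 (not_le_of_gt hlt)
  · exact lt_of_le_of_ne (hfib i j heq hlt.le) (fun hc => hlt.ne (hbij.1 hc))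

private lemma pita_perm_lt_iff {m n : ℕ} {g : Fin m → Fin n} {P : Fin m → Fin m}
    {E : Fin m → Fin n} (h : IsPita g P E) (i j : Fin m) :
    P i < P j ↔ (g i < g j ∨ (g i = g j ∧ i < j)) := by
  constructor
  · intro hP
    by_contra hr
    push_neg at hr
    rcases lt_trichotomy (g i) (g j) with h1 | h1 | h1
    · exact absurd h1 (not_lt_of_ge hr.1)
    · rcases lt_trichotomy i j with h2 | h2 | h2
      · exact absurd h2 (not_lt_of_ge (hr.2 h1))
      · exact absurd hP (by simp [h2])
      · exact absurd (pita_perm_lt h (Or.inr ⟨h1.symm, h2⟩)) (not_lt_of_gt hP)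
    · exact absurd (pita_perm_lt h (Or.inl h1)) (not_lt_of_gt hP)
  · exact pita_perm_lt h

private lemma pita_perm_unique {m n : ℕ} {g : Fin m → Fin n} {P P' : Fin m → Fin m}
    {E E' : Fin m → Fin n} (h : IsPita g P E) (h' : IsPita g P' E') : P = P' := by
  have hbij := h.2.1
  let eP := Equiv.ofBijective P hbij
  have hQmono : StrictMono (P' ∘ eP.symm) := by
    intro a b hab
    have h1 : P (eP.symm a) < P (eP.symm b) := by
      show eP (eP.symm a) < eP (eP.symm b)
      simpa using hab
    exact (pita_perm_lt_iff h' _ _).2 ((pita_perm_lt_iff h _ _).1 h1)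
  have hrange : Set.range (P' ∘ eP.symm) = Set.range (id : Fin m → Fin m) := by
    rw [Set.range_comp, Equiv.range_eq_univ, Set.image_univ,
      Set.range_eq_univ.2 h'.2.1.2, Set.range_id]
  have := (hQmono.range_inj strictMono_id).1 hrange
  funext i
  have h2 := congrFun this (eP i)
  simp only [Function.comp_apply, Equiv.symm_apply_apply, id_eq] at h2
  exact h2.symm

private lemma pita_comp {m n : ℕ} {g : Fin m → Fin n} {P : Fin m → Fin m} {E : Fin m → Fin n}
    (hbij : Function.Bijective P)
    (hfib : ∀ i j : Fin m, g i = g j → i ≤ j → P i ≤ P j)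
    (hPE : E ∘ P = g) {P' : Fin m → Fin m} {E' : Fin m → Fin n}
    (h' : IsPita E P' E') : IsPita g (P' ∘ P) E' := by
  obtain ⟨hE', hbij', hfib', hcomp'⟩ := h'
  refine ⟨hE', hbij'.comp hbij, ?_, ?_⟩
  · intro i j hg hij
    have hE : E (P i) = E (P j) := by
      rw [show E (P i) = g i from congrFun hPE i, show E (P j) = g j from congrFun hPE j, hg]
    exact hfib' _ _ hE (hfib i j hg hij)
  · calc E' ∘ (P' ∘ P) = (E' ∘ P') ∘ P := rfl
      _ = E ∘ P := by rw [hcomp']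
      _ = g := hPE

/-- The key coherence equation for the β-cells of the pita nerve in Fin:
`π(η(f₃/f₂)) ∘ π(f₂ ∘ f₃) = π(π(f₂) ∘ η(f₃)) ∘ π(f₃)`. -/
theorem pita_beta_coherence {m p q : ℕ}
    (f₃ : Fin m → Fin p) (f₂ : Fin p → Fin q)
    (p₃ : Fin m → Fin m) (e₃ : Fin m → Fin p) (hP₃ : IsPita f₃ p₃ e₃)
    (p₂ : Fin p → Fin p) (e₂ : Fin p → Fin q) (hP₂ : IsPita f₂ p₂ e₂)
    (p₂₃ : Fin m → Fin m) (e₂₃ : Fin m → Fin q) (hP₂₃ : IsPita (f₂ ∘ f₃) p₂₃ e₂₃)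
    (e : Fin m → Fin p) (he : e ∘ p₂₃ = p₂ ∘ f₃ ∧ e₂ ∘ e = e₂₃)
    (pe : Fin m → Fin m) (ee : Fin m → Fin p) (hPe : IsPita e pe ee)
    (pc : Fin m → Fin m) (ec : Fin m → Fin p) (hPc : IsPita (p₂ ∘ e₃) pc ec) :
    pe ∘ p₂₃ = pc ∘ p₃ := by
  set g : Fin m → Fin p := p₂ ∘ f₃ with hg
  have hL : IsPita g (pe ∘ p₂₃) ee := by
    refine pita_comp hP₂₃.2.1 ?_ he.1 hPe
    intro i j hgij hij
    refine hP₂₃.2.2.1 i j ?_ hij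
    show f₂ (f₃ i) = f₂ (f₃ j)
    rw [← congrFun hP₂.2.2.2 (f₃ i), ← congrFun hP₂.2.2.2 (f₃ j)]
    exact congrArg e₂ hgij
  have hR : IsPita g (pc ∘ p₃) ec := by
    refine pita_comp hP₃.2.1 ?_ ?_ hPc
    · intro i j hgij hij
      exact hP₃.2.2.1 i j (hP₂.2.1.1 hgij) hij
    · calc (p₂ ∘ e₃) ∘ p₃ = p₂ ∘ (e₃ ∘ p₃) := rfl
        _ = g := by rw [hP₃.2.2.2]
  exact pita_perm_unique hL hR
end

section
/- Weak blow-up in Fin: let h : Fin m → Fin n be monotone with fibre cardinalities c i = |h⁻¹(i)|, and for each i : Fin n let f_i : Fin (c i) → Fin (d i) be any function. Then there exists a unique pair (f, g) with g : Fin (Σ d i) → Fin n monotone with fibre cardinalities d i, and f : Fin m → Fin (Σ d i) over Fin n (g ∘ f = h), such that for each i the map induced by f from the fibre h⁻¹(i) to the fibre g⁻¹(i) equals f_i under the canonical monotone identifications of the fibres with Fin (c i) and Fin (d i). -/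
namespace WeakBlowup

variable {n : ℕ} (d : Fin n → ℕ)

/-- Partial sum of `d` below `i`. -/
def S (i : Fin n) : ℕ := ∑ k ∈ Finset.Iio i, d k

lemma S_add (i : Fin n) : S d i + d i = ∑ k ∈ Finset.Iic i, d k := by
  rw [← Finset.Iio_insert, Finset.sum_insert (by simp), S, Nat.add_comm]

lemma emb_lt {i : Fin n} {x : ℕ} (hx : x < d i) : S d i + x < ∑ k, d k := by
  calc S d i + x < S d i + d i := by omega
    _ = ∑ k ∈ Finset.Iic i, d k := S_add d i
    _ ≤ ∑ k, d k := Finset.sum_le_sum_of_subset (Finset.subset_univ _)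

/-- The canonical embedding of the `i`-th block. -/
def emb (i : Fin n) (x : Fin (d i)) : Fin (∑ k, d k) := ⟨S d i + x, emb_lt d x.2⟩

lemma emb_strictMono (i : Fin n) : StrictMono (emb d i) := by
  intro x y hxy
  simp only [emb, Fin.lt_def]
  omega

lemma emb_lt_emb {i i' : Fin n} (hii : i < i') (x : Fin (d i)) (x' : Fin (d i')) :
    emb d i x < emb d i' x' := by
  have h1 : S d i + d i ≤ S d i' := by
    rw [S_add]
    exact Finset.sum_le_sum_of_subset (fun k hk => by
      simp only [Finset.mem_Iic] at hk
      simp only [Finset.mem_Iio]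
      exact lt_of_le_of_lt hk hii)
  simp only [emb, Fin.lt_def]
  have := x.2
  omega

lemma emb_injective : Function.Injective (fun p : Σ i, Fin (d i) => emb d p.1 p.2) := by
  rintro ⟨i, x⟩ ⟨i', x'⟩ hp
  simp only at hp
  rcases lt_trichotomy i i' with hii | hii | hii
  · exact absurd hp (ne_of_lt (emb_lt_emb d hii x x'))
  · subst hii
    have : (x : ℕ) = x' := by
      have := congrArg Fin.val hp
      simp only [emb] at this
      omega
    simp [Fin.ext_iff, this]
  · exact absurd hp.symm (ne_of_lt (emb_lt_emb d hii x' x))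

lemma emb_bijective : Function.Bijective (fun p : Σ i, Fin (d i) => emb d p.1 p.2) := by
  rw [Fintype.bijective_iff_injective_and_card]
  refine ⟨emb_injective d, by simp [Fintype.card_sigma]⟩

/-- The canonical equivalence. -/
noncomputable def e : (Σ i, Fin (d i)) ≃ Fin (∑ k, d k) := Equiv.ofBijective _ (emb_bijective d)

/-- The canonical monotone map with fibre cardinalities `d`. -/
noncomputable def g (j : Fin (∑ k, d k)) : Fin n := ((e d).symm j).1

lemma e_apply (i : Fin n) (x : Fin (d i)) : e d ⟨i, x⟩ = emb d i x := rfl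

lemma g_emb (i : Fin n) (x : Fin (d i)) : g d (emb d i x) = i := by
  have : (e d).symm (e d ⟨i, x⟩) = ⟨i, x⟩ := (e d).symm_apply_apply _
  simpa [g, e_apply] using congrArg Sigma.fst this

lemma emb_g (j : Fin (∑ k, d k)) : emb d (g d j) ((e d).symm j).2 = j :=
  (e d).apply_symm_apply j

lemma g_monotone : Monotone (g d) := by
  intro j j' hjj
  by_contra hlt
  push_neg at hlt
  have := emb_lt_emb d hlt ((e d).symm j').2 ((e d).symm j).2
  rw [emb_g, emb_g] at this
  exact absurd hjj (not_le_of_gt this)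

lemma g_fibre (i : Fin n) :
    Finset.univ.filter (fun j => g d j = i) = Finset.univ.image (emb d i) := by
  ext j
  simp only [Finset.mem_filter, Finset.mem_univ, true_and, Finset.mem_image]
  constructor
  · intro hj
    subst hj
    exact ⟨_, emb_g d j⟩
  · rintro ⟨x, rfl⟩
    exact g_emb d i x

lemma g_fibre_card (i : Fin n) :
    (Finset.univ.filter (fun j => g d j = i)).card = d i := by
  rw [g_fibre, Finset.card_image_of_injective _ (emb_strictMono d i).injective]
  simp

/-- Cardinality of a sublevel set of a monotone map. -/
lemma card_filter_lt {N : ℕ} (u : Fin N → Fin n) (i : Fin n) :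
    (Finset.univ.filter (fun j => u j < i)).card
      = ∑ k ∈ Finset.Iio i, (Finset.univ.filter (fun j => u j = k)).card := by
  rw [Finset.card_eq_sum_card_fiberwise (f := u) (t := Finset.Iio i)
    (fun x hx => by simpa using (Finset.mem_filter.1 hx).2)]
  refine Finset.sum_congr rfl fun k hk => ?_
  congr 1
  ext j
  simp only [Finset.mem_filter, Finset.mem_univ, true_and, Finset.mem_Iio] at *
  constructor
  · tauto
  · rintro rfl; exact ⟨hk, rfl⟩

lemma card_filter_le {N : ℕ} (u : Fin N → Fin n) (i : Fin n) :
    (Finset.univ.filter (fun j => u j ≤ i)).card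
      = ∑ k ∈ Finset.Iic i, (Finset.univ.filter (fun j => u j = k)).card := by
  rw [Finset.card_eq_sum_card_fiberwise (f := u) (t := Finset.Iic i)
    (fun x hx => by simpa using (Finset.mem_filter.1 hx).2)]
  refine Finset.sum_congr rfl fun k hk => ?_
  congr 1
  ext j
  simp only [Finset.mem_filter, Finset.mem_univ, true_and, Finset.mem_Iic] at *
  constructor
  · tauto
  · rintro rfl; exact ⟨hk, rfl⟩

lemma mono_not_lt {N : ℕ} {u v : Fin N → Fin n} (hu : Monotone u) (hv : Monotone v)
    (hcard : ∀ i, (Finset.univ.filter (fun j => u j = i)).card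
      = (Finset.univ.filter (fun j => v j = i)).card)
    (j : Fin N) : ¬ u j < v j := by
  intro hlt
  have h1 : (j : ℕ) < (Finset.univ.filter (fun j' => u j' ≤ u j)).card := by
    have hsub : Finset.Iic j ⊆ Finset.univ.filter (fun j' => u j' ≤ u j) := by
      intro j' hj'
      simp only [Finset.mem_Iic] at hj'
      simp [hu hj']
    have := Finset.card_le_card hsub
    rw [Fin.card_Iic] at this
    omega
  have h2 : (Finset.univ.filter (fun j' => v j' < v j)).card ≤ (j : ℕ) := by
    have hsub : Finset.univ.filter (fun j' => v j' < v j) ⊆ Finset.Iio j := by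
      intro j' hj'
      simp only [Finset.mem_filter] at hj'
      simp only [Finset.mem_Iio]
      by_contra hh
      push_neg at hh
      exact absurd (hv hh) (not_le_of_gt hj'.2)
    have := Finset.card_le_card hsub
    rw [Fin.card_Iio] at this
    omega
  rw [card_filter_le] at h1
  rw [card_filter_lt] at h2
  have h3 : ∑ k ∈ Finset.Iic (u j), (Finset.univ.filter (fun j' => u j' = k)).card
      ≤ ∑ k ∈ Finset.Iio (v j), (Finset.univ.filter (fun j' => v j' = k)).card := by
    calc ∑ k ∈ Finset.Iic (u j), (Finset.univ.filter (fun j' => u j' = k)).card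
        = ∑ k ∈ Finset.Iic (u j), (Finset.univ.filter (fun j' => v j' = k)).card :=
          Finset.sum_congr rfl fun k _ => hcard k
      _ ≤ _ := Finset.sum_le_sum_of_subset (fun k hk => by
          simp only [Finset.mem_Iic] at hk
          simp only [Finset.mem_Iio]
          exact lt_of_le_of_lt hk hlt)
  omega

/-- A monotone map `Fin N → Fin n` is determined by its fibre cardinalities. -/
lemma mono_fibre_unique {N : ℕ} {u v : Fin N → Fin n} (hu : Monotone u) (hv : Monotone v)
    (hcard : ∀ i, (Finset.univ.filter (fun j => u j = i)).card
      = (Finset.univ.filter (fun j => v j = i)).card) : u = v := by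
  funext j
  rcases lt_trichotomy (u j) (v j) with hh | hh | hh
  · exact absurd hh (mono_not_lt hu hv hcard j)
  · exact hh
  · exact absurd hh (mono_not_lt hv hu (fun i => (hcard i).symm) j)

lemma range_emb (i : Fin n) : Set.range (emb d i) = {j | g d j = i} := by
  ext j
  simp only [Set.mem_range, Set.mem_setOf_eq]
  constructor
  · rintro ⟨x, rfl⟩
    exact g_emb d i x
  · intro hj
    subst hj
    exact ⟨_, emb_g d j⟩

variable {m : ℕ} (h : Fin m → Fin n) (c : Fin n → ℕ)
  (hc : ∀ i, c i = (Finset.univ.filter (fun j => h j = i)).card)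

/-- The fibre of `h` at `i` as a finset. -/
def s (i : Fin n) : Finset (Fin m) := Finset.univ.filter (fun j => h j = i)

/-- The canonical monotone identification of the fibre of `h` at `i` with `Fin (c i)`. -/
noncomputable def oi (i : Fin n) : Fin (c i) ≃o (s h i) := (s h i).orderIsoOfFin (hc i).symm

lemma oi_coe (i : Fin n) (x : Fin (c i)) :
    (oi h c hc i x : Fin m) = (s h i).orderEmbOfFin (hc i).symm x :=
  Finset.coe_orderIsoOfFin_apply _ _ _

lemma coe_s (i : Fin n) : ↑(s h i) = {j | h j = i} := by
  ext j; simp [s]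

/-- Index of `j` within its fibre. -/
noncomputable def idx (j : Fin m) : Fin (c (h j)) :=
  (oi h c hc (h j)).symm ⟨j, by simp [s]⟩

/-- The constructed map over `h`. -/
noncomputable def fmap (f : ∀ i : Fin n, Fin (c i) → Fin (d i)) (j : Fin m) :
    Fin (∑ k, d k) :=
  emb d (h j) (f (h j) (idx h c hc j))

end WeakBlowup

open WeakBlowup in
/-- The weak blow-up axiom holds in Fin: given a monotone `h : Fin m → Fin n`
with fibre cardinalities `c i`, and maps `f i : Fin (c i) → Fin (d i)`, there is a
unique pair `(f', g)` with `g` monotone with fibre cardinalities `d i`,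
`g ∘ f' = h`, and the induced maps on fibres equal to the `f i` under the canonical
monotone identifications of the fibres. -/
theorem weak_blowup_Fin {m n : ℕ} (h : Fin m → Fin n) (hmono : Monotone h)
    (c d : Fin n → ℕ)
    (hc : ∀ i, c i = (Finset.univ.filter (fun j => h j = i)).card)
    (f : ∀ i : Fin n, Fin (c i) → Fin (d i)) :
    ∃! fg : (Fin m → Fin (∑ i, d i)) × (Fin (∑ i, d i) → Fin n),
      Monotone fg.2 ∧
      (∀ i, (Finset.univ.filter (fun j => fg.2 j = i)).card = d i) ∧
      fg.2 ∘ fg.1 = h ∧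
      ∀ (i : Fin n) (εh : Fin (c i) → Fin m) (εg : Fin (d i) → Fin (∑ i, d i)),
        StrictMono εh → Set.range εh = {j | h j = i} →
        StrictMono εg → Set.range εg = {j | fg.2 j = i} →
        ∀ x, fg.1 (εh x) = εg (f i x) := by
  refine ⟨⟨fmap d h c hc f, g d⟩, ⟨g_monotone d, g_fibre_card d, ?_, ?_⟩, ?_⟩
  · funext j
    exact g_emb d (h j) _
  · intro i εh εg hεh hrh hεg hrg x
    simp only
    -- identify εg with emb d i
    have hg2 : εg = (Finset.univ.filter (fun j => g d j = i)).orderEmbOfFin (g_fibre_card d i) :=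
      Finset.orderEmbOfFin_unique _ (fun y => by
        have : εg y ∈ Set.range εg := Set.mem_range_self y
        rw [hrg] at this
        simpa using this) hεg
    have hg3 : emb d i = ⇑((Finset.univ.filter (fun j => g d j = i)).orderEmbOfFin
        (g_fibre_card d i)) :=
      Finset.orderEmbOfFin_unique _ (fun y => by simp [g_emb]) (emb_strictMono d i)
    rw [hg2, ← hg3]
    -- identify εh with the canonical embedding
    have hh2 : εh = ⇑((s h i).orderEmbOfFin (hc i).symm) :=
      Finset.orderEmbOfFin_unique _ (fun y => by
        have : εh y ∈ Set.range εh := Set.mem_range_self y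
        rw [hrh] at this
        simpa [s] using this) hεh
    have hji : h (εh x) = i := by
      have : εh x ∈ Set.range εh := Set.mem_range_self x
      rw [hrh] at this
      exact this
    have hje : ((s h i).orderEmbOfFin (hc i).symm) x = εh x := (congrFun hh2 x).symm
    clear hg2 hg3 hεg hrg hεh hrh hh2 εg
    generalize hgen : εh x = j at hji hje ⊢
    clear hgen εh
    subst hji
    show emb d (h j) (f (h j) (idx h c hc j)) = emb d (h j) (f (h j) x)
    congr 1
    have : idx h c hc j = x := by
      have hsub : (⟨j, by simp [s]⟩ : (s h (h j))) = oi h c hc (h j) x := by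
        apply Subtype.ext
        rw [oi_coe]
        exact hje.symm
      rw [idx, hsub, OrderIso.symm_apply_apply]
    rw [this]
  · rintro ⟨f2, g2⟩ ⟨hm2, hcard2, hcomp2, hfib2⟩
    have hg : g2 = g d :=
      mono_fibre_unique hm2 (g_monotone d) (fun i => by rw [hcard2 i, g_fibre_card d i])
    have hf : f2 = fmap d h c hc f := by
      funext j
      have hfib := hfib2 (h j) (⇑((s h (h j)).orderEmbOfFin (hc (h j)).symm)) (emb d (h j))
        (OrderEmbedding.strictMono _)
        (by exact (Finset.range_orderEmbOfFin (s h (h j)) (hc (h j)).symm).trans (coe_s h (h j)))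
        (emb_strictMono d (h j))
        (by rw [hg]; exact range_emb d (h j))
        (idx h c hc j)
      have hkey : (s h (h j)).orderEmbOfFin (hc (h j)).symm (idx h c hc j) = j := by
        rw [← oi_coe h c hc]
        show ((oi h c hc (h j)) ((oi h c hc (h j)).symm ⟨j, _⟩) : Fin m) = j
        rw [OrderIso.apply_symm_apply]
      rw [hkey] at hfib
      exact hfib
    exact Prod.ext hf hg
end

section
/- Pita factorisation is compatible with ordinal sum: for f : Fin m → Fin n and g : Fin m' → Fin n', let f ⊕ g : Fin (m+m') → Fin (n+n') denote the ordinal sum (block sum) of f and g. Then η(f ⊕ g) = η(f) ⊕ η(g) and π(f ⊕ g) = π(f) ⊕ π(g). -/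
/-- The ordinal (block) sum of two maps of finite ordinals. -/
def osum {m n m' n' : ℕ} (f : Fin m → Fin n) (g : Fin m' → Fin n') :
    Fin (m + m') → Fin (n + n') :=
  fun x => finSumFinEquiv (Sum.map f g (finSumFinEquiv.symm x))

lemma osum_left {m n m' n' : ℕ} (f : Fin m → Fin n) (g : Fin m' → Fin n') (x : Fin m) :
    osum f g (Fin.castAdd m' x) = Fin.castAdd n' (f x) := by
  simp [osum, finSumFinEquiv_symm_apply_castAdd]

lemma osum_right {m n m' n' : ℕ} (f : Fin m → Fin n) (g : Fin m' → Fin n') (x : Fin m') :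
    osum f g (Fin.natAdd m x) = Fin.natAdd n (g x) := by
  simp [osum, finSumFinEquiv_symm_apply_natAdd]

/-- key order characterisation of the π of a pita factorisation -/
lemma pita_le_iff {m n : ℕ} {f : Fin m → Fin n} {p : Fin m → Fin m} {e : Fin m → Fin n}
    (h : IsPita f p e) (i j : Fin m) :
    p i ≤ p j ↔ (f i < f j ∨ (f i = f j ∧ i ≤ j)) := by
  obtain ⟨hmono, hbij, hcomp, heq⟩ := h
  have hfp : ∀ k, e (p k) = f k := fun k => congrFun heq k
  constructor
  · intro hle
    rcases lt_trichotomy (f i) (f j) with h1 | h1 | h1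
    · exact Or.inl h1
    · rcases le_or_gt i j with h2 | h2
      · exact Or.inr ⟨h1, h2⟩
      · -- j < i, f i = f j gives p j ≤ p i; injectivity gives strict
        have := hcomp j i h1.symm h2.le
        have hne : p i ≠ p j := fun hpe => h2.ne (hbij.1 hpe).symm
        exact absurd (le_antisymm hle this) hne
    · -- f j < f i : then p j < p i, contradiction
      have : e (p j) < e (p i) := by rw [hfp, hfp]; exact h1
      have : p j < p i := by
        by_contra hc
        exact absurd (hmono (not_lt.mp hc)) (not_le.mpr this)
      exact absurd hle (not_le.mpr this)
  · rintro (h1 | ⟨h1, h2⟩)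
    · have : ¬ p j ≤ p i := by
        intro hc
        have := hmono hc
        rw [hfp, hfp] at this
        exact absurd h1 (not_lt.mpr this)
      exact (not_le.mp this).le
    · exact hcomp i j h1 h2

/-- uniqueness of pita factorisations -/
lemma pita_unique {m n : ℕ} {f : Fin m → Fin n} {p e p' e'}
    (h : IsPita f p e) (h' : IsPita f p' e') : e = e' ∧ p = p' := by
  have hbij := h.2.1
  have hbij' := h'.2.1
  set P : Fin m ≃ Fin m := Equiv.ofBijective p hbij with hP
  have hPa : ∀ i, P i = p i := fun _ => rfl
  -- q = p' ∘ P.symm is a monotone bijection, hence identity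
  set q : Fin m → Fin m := fun x => p' (P.symm x) with hq
  have hqmono : Monotone q := by
    intro x y hxy
    have hx : p (P.symm x) = x := P.apply_symm_apply x
    have hy : p (P.symm y) = y := P.apply_symm_apply y
    have : p (P.symm x) ≤ p (P.symm y) := by rw [hx, hy]; exact hxy
    rw [pita_le_iff h] at this
    exact (pita_le_iff h' _ _).mpr this
  have hqbij : Function.Bijective q := hbij'.comp P.symm.bijective
  have hqsm : StrictMono q := hqmono.strictMono_of_injective hqbij.1
  have hqid : ∀ x, q x = x := by
    intro x
    have := Fin.coe_orderIso_apply (StrictMono.orderIsoOfSurjective q hqsm hqbij.2) x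
    exact Fin.ext this
  have hpp : p = p' := by
    funext i
    have := hqid (p i)
    rw [hq] at this
    simp only at this
    rw [← hPa, P.symm_apply_apply] at this
    exact this.symm
  refine ⟨?_, hpp⟩
  funext x
  have h1 : e (p (P.symm x)) = f (P.symm x) := congrFun h.2.2.2 (P.symm x)
  have h2 : e' (p' (P.symm x)) = f (P.symm x) := congrFun h'.2.2.2 (P.symm x)
  have hx : p (P.symm x) = x := P.apply_symm_apply x
  rw [hx] at h1
  rw [← hpp, hx] at h2
  rw [h1, h2]

lemma isPita_osum {m n m' n' : ℕ}
    {f : Fin m → Fin n} {g : Fin m' → Fin n'}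
    {pf : Fin m → Fin m} {ef : Fin m → Fin n} (hf : IsPita f pf ef)
    {pg : Fin m' → Fin m'} {eg : Fin m' → Fin n'} (hg : IsPita g pg eg) :
    IsPita (osum f g) (osum pf pg) (osum ef eg) := by
  obtain ⟨hfm, hfb, hfc, hfe⟩ := hf
  obtain ⟨hgm, hgb, hgc, hge⟩ := hg
  refine ⟨?_, ?_, ?_, ?_⟩
  · -- monotone
    intro x y hxy
    induction x using Fin.addCases with
    | left i =>
      induction y using Fin.addCases with
      | left j =>
        rw [osum_left, osum_left]
        have : i ≤ j := by
          simp only [Fin.le_def, Fin.coe_castAdd] at hxy; exact hxy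
        simp only [Fin.le_def, Fin.coe_castAdd]
        exact hfm this
      | right j =>
        rw [osum_left, osum_right]
        simp only [Fin.le_def, Fin.coe_castAdd, Fin.coe_natAdd]
        exact le_trans (le_of_lt (ef i).isLt) (Nat.le_add_right n _)
    | right i =>
      induction y using Fin.addCases with
      | left j =>
        exfalso
        simp only [Fin.le_def, Fin.coe_natAdd, Fin.coe_castAdd] at hxy
        omega
      | right j =>
        rw [osum_right, osum_right]
        have : i ≤ j := by
          simp only [Fin.le_def, Fin.coe_natAdd] at hxy ⊢
          omega
        simp only [Fin.le_def, Fin.coe_natAdd]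
        exact Nat.add_le_add_left (hgm this) n
  · -- bijective
    have : osum pf pg = (finSumFinEquiv.symm.trans
        (((Equiv.ofBijective pf hfb).sumCongr (Equiv.ofBijective pg hgb)).trans
          finSumFinEquiv) : Fin (m + m') → Fin (m + m')) := by
      funext x
      simp only [osum, Equiv.trans_apply, Equiv.sumCongr_apply]
      rfl
    rw [this]
    exact Equiv.bijective _
  · -- order compat on fibers
    intro i j hfeq hle
    induction i using Fin.addCases with
    | left i =>
      induction j using Fin.addCases with
      | left j =>
        rw [osum_left, osum_left] at hfeq
        rw [osum_left, osum_left]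
        have h1 : f i = f j := by
          have := Fin.val_eq_of_eq hfeq
          simp only [Fin.coe_castAdd] at this
          exact Fin.ext this
        have h2 : i ≤ j := by
          simp only [Fin.le_def, Fin.coe_castAdd] at hle; exact hle
        simp only [Fin.le_def, Fin.coe_castAdd]
        exact hfc i j h1 h2
      | right j =>
        rw [osum_left, osum_right]
        simp only [Fin.le_def, Fin.coe_castAdd, Fin.coe_natAdd]
        exact le_trans (le_of_lt (pf i).isLt) (Nat.le_add_right m _)
    | right i =>
      induction j using Fin.addCases with
      | left j =>
        exfalso
        simp only [Fin.le_def, Fin.coe_natAdd, Fin.coe_castAdd] at hle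
        omega
      | right j =>
        rw [osum_right, osum_right] at hfeq
        rw [osum_right, osum_right]
        have h1 : g i = g j := by
          have := Fin.val_eq_of_eq hfeq
          simp only [Fin.coe_natAdd] at this
          exact Fin.ext (by omega)
        have h2 : i ≤ j := by
          simp only [Fin.le_def, Fin.coe_natAdd] at hle ⊢
          omega
        simp only [Fin.le_def, Fin.coe_natAdd]
        exact Nat.add_le_add_left (hgc i j h1 h2) m
  · -- composition
    funext x
    induction x using Fin.addCases with
    | left i =>
      simp only [Function.comp_apply, osum_left]
      exact congrArg _ (congrFun hfe i)
    | right i =>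
      simp only [Function.comp_apply, osum_right]
      exact congrArg _ (congrFun hge i)

/-- Pita factorisation is compatible with ordinal sum:
`η(f ⊕ g) = η(f) ⊕ η(g)` and `π(f ⊕ g) = π(f) ⊕ π(g)`. -/
theorem pita_osum {m n m' n' : ℕ}
    (f : Fin m → Fin n) (g : Fin m' → Fin n')
    (pf : Fin m → Fin m) (ef : Fin m → Fin n) (hf : IsPita f pf ef)
    (pg : Fin m' → Fin m') (eg : Fin m' → Fin n') (hg : IsPita g pg eg)
    (ps : Fin (m + m') → Fin (m + m')) (es : Fin (m + m') → Fin (n + n'))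
    (hs : IsPita (osum f g) ps es) :
    es = osum ef eg ∧ ps = osum pf pg := by
  exact pita_unique hs (isPita_osum hf hg)
end

section
/- For g : Fin m → Fin p and f : Fin p → Fin n, one has η(f ∘ g) = η(f) ∘ η( π(f) ∘ η(g) ), i.e. the monotone part of a composite equals the monotone part of f composed with the monotone part of π(f) ∘ η(g). -/
/-- Two monotone tuples differing by a permutation are equal. -/
lemma mono_perm_eq {m n : ℕ} (e₁ e₂ : Fin m → Fin n) (σ : Equiv.Perm (Fin m))
    (h₁ : Monotone e₁) (h₂ : Monotone e₂) (h : e₁ = e₂ ∘ σ) : e₁ = e₂ := by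
  have key := Tuple.comp_perm_comp_sort_eq_comp_sort (f := e₂) (σ := σ)
  rw [← h] at key
  rwa [(Tuple.sort_eq_refl_iff_monotone).mpr h₁, (Tuple.sort_eq_refl_iff_monotone).mpr h₂,
    Equiv.coe_refl, Function.comp_id, Function.comp_id] at key

/-- The valid half of the Warning after Proposition 5.5:
`η(f ∘ g) = η(f) ∘ η(π(f) ∘ η(g))`. -/
theorem eta_comp {m p n : ℕ}
    (g : Fin m → Fin p) (f : Fin p → Fin n)
    (pg : Fin m → Fin m) (eg : Fin m → Fin p) (hg : IsPita g pg eg)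
    (pf : Fin p → Fin p) (ef : Fin p → Fin n) (hf : IsPita f pf ef)
    (pc : Fin m → Fin m) (ec : Fin m → Fin n) (hc : IsPita (f ∘ g) pc ec)
    (pm : Fin m → Fin m) (em : Fin m → Fin p) (hm : IsPita (pf ∘ eg) pm em) :
    ec = ef ∘ em := by
  obtain ⟨mg, bg, _, fg⟩ := hg
  obtain ⟨mf, bf, _, ff⟩ := hf
  obtain ⟨mc, bc, _, fc⟩ := hc
  obtain ⟨mm, bm, _, fm⟩ := hm
  set σg := Equiv.ofBijective pg bg with hσg
  set σc := Equiv.ofBijective pc bc with hσc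
  set σm := Equiv.ofBijective pm bm with hσm
  have key : (ef ∘ em) ∘ (pm ∘ pg) = f ∘ g := by
    have h0 : em ∘ (pm ∘ pg) = pf ∘ (eg ∘ pg) := by
      rw [← Function.comp_assoc, fm, Function.comp_assoc]
    calc (ef ∘ em) ∘ (pm ∘ pg) = ef ∘ (em ∘ (pm ∘ pg)) := by
          rw [Function.comp_assoc]
      _ = (ef ∘ pf) ∘ (eg ∘ pg) := by rw [h0, ← Function.comp_assoc]
      _ = f ∘ g := by rw [ff, fg]
  apply mono_perm_eq ec (ef ∘ em) ((σc.symm.trans σg).trans σm) mc (mf.comp mm)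
  funext i
  have h2 : ∀ j, ef (em (pm (pg j))) = f (g j) := fun j => congrFun key j
  have h3 : ec i = f (g (σc.symm i)) := by
    have := congrFun fc (σc.symm i)
    simp only [Function.comp_apply] at this
    rw [← this]
    congr 1
    exact (σc.apply_symm_apply i).symm
  rw [h3, ← h2 (σc.symm i)]
  rfl
end
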